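/- arXiv:0708.3451 — 2 statements merged into one kernel-verified Lean document; each statement's English description precedes it below -/
import Mathlib

section
/- Let n ≥ 1. Then for a rational function f ∈ ℝ(t) the following are equivalent: (i) there exist x₁, y₁, …, x_n, y_n ∈ ℝ(t) with x_i³ + y_i³ = 1 for all i and f = x₁ + x₂·t + ⋯ + x_n·t^{n−1}; (ii) f is (the image in ℝ(t) of) a polynomial in ℝ[t] of degree at most n − 1. In particular, the set of real polynomials of degree at most n − 1 is a diophantine subset of ℝ(t). -/
/-- A subset `D` of a commutative ring `R` is *diophantine* if there are finitely many
polynomials `F i` in variables `x, y₁, …, y_n` with coefficients in `R` such that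
`r ∈ D` iff the system `F i (r, y₁, …, y_n) = 0` has a solution in `R`. -/
def IsDiophantine {R : Type*} [CommRing R] (D : Set R) : Prop :=
  ∃ (m n : ℕ) (F : Fin m → MvPolynomial (Fin (n + 1)) R),
    ∀ r : R, r ∈ D ↔ ∃ y : Fin n → R,
      ∀ i : Fin m, MvPolynomial.eval (Fin.cons r y) (F i) = 0

open Polynomial UniqueFactorizationMonoid UniqueFactorizationDomain

lemma exists_cube_root (s : ℝ) : ∃ b : ℝ, b ^ 3 = s := by
  rcases le_or_gt 0 s with hs | hs
  · refine ⟨s ^ ((3:ℝ)⁻¹), ?_⟩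
    rw [← Real.rpow_natCast (s ^ ((3:ℝ)⁻¹)) 3, ← Real.rpow_mul hs]
    norm_num
  · refine ⟨-((-s) ^ ((3:ℝ)⁻¹)), ?_⟩
    have h := neg_nonneg.mpr hs.le
    rw [show (-((-s) ^ ((3:ℝ)⁻¹))) ^ 3 = -(((-s) ^ ((3:ℝ)⁻¹)) ^ 3) by ring,
      ← Real.rpow_natCast ((-s) ^ ((3:ℝ)⁻¹)) 3, ← Real.rpow_mul h]
    norm_num

lemma sq_ne_neg_three (u : RatFunc ℝ) : u ^ 2 ≠ -3 := by
  intro h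
  have hQ := RatFunc.denom_ne_zero u
  have key : (u.num) ^ 2 = -3 * (u.denom) ^ 2 := by
    apply RatFunc.algebraMap_injective ℝ
    have h2 : algebraMap ℝ[X] (RatFunc ℝ) u.num = u * algebraMap ℝ[X] (RatFunc ℝ) u.denom := by
      exact ((div_eq_iff (RatFunc.algebraMap_ne_zero hQ)).mp (RatFunc.num_div_denom u))
    simp only [map_pow, map_mul, map_neg, map_ofNat, h2]
    linear_combination (algebraMap ℝ[X] (RatFunc ℝ) u.denom) ^ 2 * h
  have hPne : u.num ≠ 0 := by
    intro h0
    rw [h0] at key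
    have h4 : (3 : ℝ[X]) * u.denom ^ 2 = 0 := by linear_combination key
    rcases mul_eq_zero.mp h4 with h5 | h5
    · exact (by norm_num : (3:ℝ[X]) ≠ 0) h5
    · exact pow_ne_zero _ hQ h5
  have h1 : (u.num.leadingCoeff) ^ 2 = -3 * (u.denom.leadingCoeff) ^ 2 := by
    have := congrArg Polynomial.leadingCoeff key
    rwa [leadingCoeff_pow, show (-3 * u.denom ^ 2 : ℝ[X]) = Polynomial.C (-3) * u.denom ^ 2 by
      rw [map_neg, map_ofNat], leadingCoeff_mul, leadingCoeff_pow, leadingCoeff_C] at this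
  have h2 : u.num.leadingCoeff ≠ 0 := leadingCoeff_ne_zero.mpr hPne
  have h3 : u.denom.leadingCoeff ≠ 0 := leadingCoeff_ne_zero.mpr hQ
  nlinarith [sq_nonneg u.num.leadingCoeff, sq_nonneg u.denom.leadingCoeff,
    pow_pos (abs_pos.mpr h3) 2, sq_abs u.denom.leadingCoeff]

lemma cube_eq_one {x : RatFunc ℝ} (h : x ^ 3 = 1) : x = 1 := by
  have h2 : (x - 1) * (x ^ 2 + x + 1) = 0 := by linear_combination h
  rcases mul_eq_zero.mp h2 with h3 | h3
  · exact sub_eq_zero.mp h3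
  · exfalso
    exact sq_ne_neg_three (2 * x + 1) (by linear_combination 4 * h3)

lemma flt3_poly {a b c : ℝ[X]} (ha : a ≠ 0) (hb : b ≠ 0) (hc : c ≠ 0)
    (hab : IsCoprime a b) (hsum : a ^ 3 + b ^ 3 = c ^ 3) :
    a.natDegree = 0 ∧ b.natDegree = 0 ∧ c.natDegree = 0 := by
  classical
  have hbc : IsCoprime b c := by
    have h1 : IsCoprime (b ^ 3) (a ^ 3 + b ^ 3 * 1) :=
      (hab.symm.pow (n := 3) (m := 3)).add_mul_left_right 1
    rw [mul_one, hsum] at h1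
    exact (IsCoprime.pow_left_iff (by norm_num)).mp
      ((IsCoprime.pow_right_iff (by norm_num)).mp h1)
  have hca : IsCoprime c a := by
    have h1 : IsCoprime (a ^ 3) (b ^ 3 + a ^ 3 * 1) :=
      (hab.pow (n := 3) (m := 3)).add_mul_left_right 1
    rw [mul_one, add_comm, hsum] at h1
    exact ((IsCoprime.pow_left_iff (m := 3) (by norm_num)).mp
      ((IsCoprime.pow_right_iff (by norm_num)).mp h1)).symm
  have habc := Polynomial.abc (pow_ne_zero 3 ha) (pow_ne_zero 3 hb)
    (neg_ne_zero.mpr (pow_ne_zero 3 hc)) (hab.pow)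
    (by rw [hsum]; ring)
  rcases habc with ⟨h1, h2, h3⟩ | ⟨h1, h2, h3⟩
  · exfalso
    have hrad : radical (a ^ 3 * b ^ 3 * -c ^ 3) = radical (a * b * c) := by
      rw [show a ^ 3 * b ^ 3 * -c ^ 3 = -((a * b * c) ^ 3) by ring, radical_neg,
        radical_pow _ (by norm_num)]
    rw [hrad] at h1 h2 h3
    have hd : (radical (a * b * c)).natDegree ≤ (a * b * c).natDegree :=
      Polynomial.natDegree_le_of_dvd (radical_dvd_self (a := a * b * c))
        (by simp [ha, hb, hc])
    have he : (a * b * c).natDegree = a.natDegree + b.natDegree + c.natDegree := by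
      rw [Polynomial.natDegree_mul (mul_ne_zero ha hb) hc, Polynomial.natDegree_mul ha hb]
    rw [Polynomial.natDegree_pow] at h1 h2
    rw [Polynomial.natDegree_neg, Polynomial.natDegree_pow] at h3
    omega
  · refine ⟨?_, ?_, ?_⟩
    · have := Polynomial.natDegree_eq_zero_of_derivative_eq_zero h1
      rw [Polynomial.natDegree_pow] at this; omega
    · have := Polynomial.natDegree_eq_zero_of_derivative_eq_zero h2
      rw [Polynomial.natDegree_pow] at this; omega
    · rw [Polynomial.derivative_neg, neg_eq_zero] at h3
      have := Polynomial.natDegree_eq_zero_of_derivative_eq_zero h3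
      rw [Polynomial.natDegree_pow] at this; omega

lemma constant_of_cube {x y : RatFunc ℝ} (h : x ^ 3 + y ^ 3 = 1) :
    ∃ r : ℝ, x = RatFunc.C r := by
  classical
  by_cases hx : x = 0
  · exact ⟨0, by simp [hx]⟩
  by_cases hy : y = 0
  · refine ⟨1, ?_⟩
    rw [hy] at h
    simp only [ne_eq, OfNat.ofNat_ne_zero, not_false_eq_true, zero_pow, add_zero] at h
    rw [cube_eq_one h, map_one]
  set A := algebraMap ℝ[X] (RatFunc ℝ) with hA
  have hdx := RatFunc.denom_ne_zero x
  have hdy := RatFunc.denom_ne_zero y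
  have hxe : A x.num = x * A x.denom :=
    (div_eq_iff (RatFunc.algebraMap_ne_zero hdx)).mp (RatFunc.num_div_denom x)
  have hye : A y.num = y * A y.denom :=
    (div_eq_iff (RatFunc.algebraMap_ne_zero hdy)).mp (RatFunc.num_div_denom y)
  set P := x.num * y.denom with hP
  set Q := y.num * x.denom with hQ
  set D := x.denom * y.denom with hD
  have hPne : P ≠ 0 := mul_ne_zero (RatFunc.num_ne_zero hx) hdy
  have hQne : Q ≠ 0 := mul_ne_zero (RatFunc.num_ne_zero hy) hdx
  have hDne : D ≠ 0 := mul_ne_zero hdx hdy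
  have heq : P ^ 3 + Q ^ 3 = D ^ 3 := by
    apply RatFunc.algebraMap_injective ℝ
    simp only [hP, hQ, hD, map_add, map_pow, map_mul, ← hA, hxe, hye]
    linear_combination (A x.denom * A y.denom) ^ 3 * h
  obtain ⟨g, a1, b1, hgne, ha1, hb1, hcop⟩ :
      ∃ g a1 b1 : ℝ[X], g ≠ 0 ∧ P = g * a1 ∧ Q = g * b1 ∧ IsCoprime a1 b1 := by
    refine ⟨GCDMonoid.gcd P Q, P / GCDMonoid.gcd P Q,
      Q / GCDMonoid.gcd P Q, gcd_ne_zero_of_right hQne, ?_, ?_,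
      isCoprime_div_gcd_div_gcd hQne⟩
    · exact (EuclideanDomain.mul_div_cancel' (gcd_ne_zero_of_right hQne)
        (gcd_dvd_left P Q)).symm
    · exact (EuclideanDomain.mul_div_cancel' (gcd_ne_zero_of_right hQne)
        (gcd_dvd_right P Q)).symm
  have hgD : g ∣ D := by
    have hgD3 : g ^ 3 ∣ D ^ 3 := by
      rw [← heq]
      exact dvd_add (pow_dvd_pow_of_dvd ⟨a1, ha1⟩ 3) (pow_dvd_pow_of_dvd ⟨b1, hb1⟩ 3)
    exact (IsIntegrallyClosed.pow_dvd_pow_iff three_ne_zero).mp hgD3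
  obtain ⟨c1, hc1⟩ := hgD
  have ha1ne : a1 ≠ 0 := fun h0 => hPne (by rw [ha1, h0, mul_zero])
  have hb1ne : b1 ≠ 0 := fun h0 => hQne (by rw [hb1, h0, mul_zero])
  have hc1ne : c1 ≠ 0 := fun h0 => hDne (by rw [hc1, h0, mul_zero])
  have heq1 : a1 ^ 3 + b1 ^ 3 = c1 ^ 3 := by
    have h9 : g ^ 3 * (a1 ^ 3 + b1 ^ 3) = g ^ 3 * c1 ^ 3 := by
      rw [ha1, hb1, hc1] at heq; linear_combination heq
    exact mul_left_cancel₀ (pow_ne_zero 3 hgne) h9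
  obtain ⟨hda, _, hdc⟩ := flt3_poly ha1ne hb1ne hc1ne hcop heq1
  obtain ⟨r, hr⟩ := Polynomial.natDegree_eq_zero.mp hda
  obtain ⟨s, hs⟩ := Polynomial.natDegree_eq_zero.mp hdc
  have hsne : s ≠ 0 := fun h0 => hc1ne (by rw [← hs, h0, map_zero])
  refine ⟨r / s, ?_⟩
  have hxPD : x = A P / A D := by
    rw [hP, hD, map_mul, map_mul, mul_div_mul_right _ _ (RatFunc.algebraMap_ne_zero hdy),
      RatFunc.num_div_denom]
  rw [hxPD, ha1, hc1, ← hr, ← hs, map_mul, map_mul,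
    mul_div_mul_left _ _ (RatFunc.algebraMap_ne_zero hgne), hA,
    RatFunc.algebraMap_C, RatFunc.algebraMap_C, map_div₀]

lemma part1 (n : ℕ) (hn : 1 ≤ n) (f : RatFunc ℝ) :
    (∃ x y : Fin n → RatFunc ℝ,
        (∀ i, x i ^ 3 + y i ^ 3 = 1) ∧
        f = ∑ i : Fin n, x i * RatFunc.X ^ (i : ℕ)) ↔
    (∃ p : Polynomial ℝ, p.degree ≤ (n - 1 : ℕ) ∧
        f = algebraMap (Polynomial ℝ) (RatFunc ℝ) p) := by
  constructor
  · rintro ⟨x, y, hxy, hf⟩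
    choose r hr using fun i => constant_of_cube (hxy i)
    refine ⟨∑ i : Fin n, Polynomial.C (r i) * Polynomial.X ^ (i : ℕ), ?_, ?_⟩
    · refine le_trans (Polynomial.degree_sum_le _ _) ?_
      rw [Finset.sup_le_iff]
      intro i _
      refine le_trans (Polynomial.degree_C_mul_X_pow_le _ _) ?_
      exact_mod_cast Nat.cast_le.mpr (by omega : (i : ℕ) ≤ n - 1)
    · rw [hf, map_sum]
      apply Finset.sum_congr rfl
      intro i _
      rw [hr i, map_mul, map_pow, RatFunc.algebraMap_C, RatFunc.algebraMap_X]
  · rintro ⟨p, hdeg, hf⟩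
    choose b hb using fun i : Fin n => exists_cube_root (1 - (p.coeff i) ^ 3)
    refine ⟨fun i => RatFunc.C (p.coeff i), fun i => RatFunc.C (b i), fun i => ?_, ?_⟩
    · rw [← map_pow, ← map_pow, ← map_add]
      have h1 : p.coeff i ^ 3 + b i ^ 3 = 1 := by rw [hb i]; ring
      rw [h1, map_one]
    · have hnat : p.natDegree < n :=
        lt_of_le_of_lt (Polynomial.natDegree_le_iff_degree_le.mpr hdeg) (by omega)
      rw [hf]
      conv_lhs => rw [p.as_sum_range' n hnat]
      rw [map_sum, ← Fin.sum_univ_eq_sum_range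
        (fun i => algebraMap (Polynomial ℝ) (RatFunc ℝ) (Polynomial.monomial i (p.coeff i)))]
      apply Finset.sum_congr rfl
      intro i _
      rw [← Polynomial.C_mul_X_pow_eq_monomial, map_mul, map_pow,
        RatFunc.algebraMap_C, RatFunc.algebraMap_X]

theorem fermat_cubic_diophantine_set_real (n : ℕ) (hn : 1 ≤ n) :
    (∀ f : RatFunc ℝ,
        (∃ x y : Fin n → RatFunc ℝ,
            (∀ i, x i ^ 3 + y i ^ 3 = 1) ∧
            f = ∑ i : Fin n, x i * RatFunc.X ^ (i : ℕ)) ↔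
        (∃ p : Polynomial ℝ, p.degree ≤ (n - 1 : ℕ) ∧
            f = algebraMap (Polynomial ℝ) (RatFunc ℝ) p)) ∧
    IsDiophantine {f : RatFunc ℝ | ∃ p : Polynomial ℝ, p.degree ≤ (n - 1 : ℕ) ∧
        f = algebraMap (Polynomial ℝ) (RatFunc ℝ) p} := by
  refine ⟨part1 n hn, ?_⟩
  refine ⟨n + 1, n + n, fun j =>
    if h : (j : ℕ) < n then
      (MvPolynomial.X (Fin.succ (Fin.castAdd n ⟨j, h⟩))) ^ 3 +
      (MvPolynomial.X (Fin.succ (Fin.natAdd n ⟨j, h⟩))) ^ 3 - 1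
    else
      MvPolynomial.X 0 - ∑ i : Fin n, MvPolynomial.C (RatFunc.X ^ (i : ℕ)) *
        MvPolynomial.X (Fin.succ (Fin.castAdd n i)), ?_⟩
  intro r
  rw [Set.mem_setOf_eq, ← part1 n hn r]
  constructor
  · rintro ⟨x, y, hxy, hf⟩
    refine ⟨Fin.append x y, fun j => ?_⟩
    by_cases h : (j : ℕ) < n
    · beta_reduce
      rw [dif_pos h]
      simp only [map_sub, map_add, map_pow, map_one, MvPolynomial.eval_X, Fin.cons_succ,
        Fin.append_left, Fin.append_right]
      rw [hxy ⟨j, h⟩, sub_self]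
    · beta_reduce
      rw [dif_neg h]
      simp only [map_sub, MvPolynomial.eval_X, Fin.cons_zero, map_sum, map_mul,
        MvPolynomial.eval_C, Fin.cons_succ, Fin.append_left]
      rw [sub_eq_zero, hf]
      exact Finset.sum_congr rfl fun i _ => mul_comm _ _
  · rintro ⟨w, hw⟩
    refine ⟨fun i => w (Fin.castAdd n i), fun i => w (Fin.natAdd n i), fun i => ?_, ?_⟩
    · have h := hw (Fin.castSucc i)
      beta_reduce at h
      rw [dif_pos (by simp only [Fin.coe_castSucc]; exact i.isLt)] at h
      simp only [map_sub, map_add, map_pow, map_one, MvPolynomial.eval_X, Fin.cons_succ] at h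
      rw [sub_eq_zero] at h
      simpa using h
    · have h := hw (Fin.last n)
      beta_reduce at h
      rw [dif_neg (by simp)] at h
      simp only [map_sub, MvPolynomial.eval_X, Fin.cons_zero, map_sum, map_mul,
        MvPolynomial.eval_C, Fin.cons_succ] at h
      rw [sub_eq_zero] at h
      exact h.trans (Finset.sum_congr rfl fun i _ => mul_comm _ _)
end

section
/- For every rational function g ∈ ℝ(t), the set L₁(g) of all f ∈ ℝ(t) such that (g − f)(x) ≥ 0 for every real number x at which g − f is defined, is a diophantine subset of ℝ(t). -/
open Polynomial


lemma nonneg_of_nonneg_off_roots (r s : Polynomial ℝ) (hs : s ≠ 0)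
    (h : ∀ x : ℝ, s.eval x ≠ 0 → 0 ≤ r.eval x) : ∀ x : ℝ, 0 ≤ r.eval x := by
  have hfin : Set.Finite {x : ℝ | s.IsRoot x} := s.finite_setOf_isRoot hs
  have hdense : Dense ({x : ℝ | s.IsRoot x}ᶜ) := hfin.countable.dense_compl ℝ
  have hclosed : IsClosed {x : ℝ | 0 ≤ r.eval x} :=
    isClosed_le continuous_const r.continuous
  have hsub : {x : ℝ | s.IsRoot x}ᶜ ⊆ {x : ℝ | 0 ≤ r.eval x} := fun y hy => h y hy
  intro x
  have := hclosed.closure_subset_iff.2 hsub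
  rw [hdense.closure_eq] at this
  exact this (Set.mem_univ x)


lemma sum_two_sq_aux :
    ∀ (n : ℕ) (p : Polynomial ℝ), p.natDegree ≤ n →
    (∀ x : ℝ, 0 ≤ p.eval x) → ∃ a b : Polynomial ℝ, p = a ^ 2 + b ^ 2 := by
  intro n
  induction n using Nat.strong_induction_on with
  | _ n ih =>
    intro p hdeg hp
    by_cases hp0 : p = 0
    · exact ⟨0, 0, by simp [hp0]⟩
    by_cases h0 : p.natDegree = 0
    · obtain ⟨c, rfl⟩ : ∃ c, p = C c := ⟨p.coeff 0, p.eq_C_of_natDegree_eq_zero h0⟩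
      have hc : 0 ≤ c := by simpa using hp 0
      exact ⟨C (Real.sqrt c), 0, by rw [← C_pow, Real.sq_sqrt hc]; ring⟩
    -- degree ≥ 1 : find a complex root
    set P := p.map (algebraMap ℝ ℂ) with hP
    have hPne : P ≠ 0 := by simpa [hP, Polynomial.map_eq_zero] using hp0
    have hPdeg : 0 < P.degree := by
      rw [← natDegree_pos_iff_degree_pos, hP, natDegree_map]
      omega
    obtain ⟨z, hz⟩ := Complex.exists_root hPdeg
    by_cases him : z.im = 0
    · -- real root
      have hzre : z = (z.re : ℂ) := by
        apply Complex.ext <;> simp [him]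
      have hroot : p.eval z.re = 0 := by
        have h5 : P.eval (algebraMap ℝ ℂ z.re) = algebraMap ℝ ℂ (p.eval z.re) := by
          rw [hP, Polynomial.eval_map, Polynomial.eval₂_at_apply]
        have h6 : algebraMap ℝ ℂ (p.eval z.re) = 0 := by
          rw [← h5]
          have : (algebraMap ℝ ℂ) z.re = z := by
            rw [Complex.coe_algebraMap, ← hzre]
          rw [this]; exact hz
        rw [Complex.coe_algebraMap] at h6
        exact_mod_cast h6
      have hderiv : p.derivative.eval z.re = 0 := by
        have hmin : IsLocalMin (fun x => p.eval x) z.re :=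
          Filter.Eventually.of_forall (fun y => by simpa [hroot] using hp y)
        have := hmin.deriv_eq_zero
        rwa [Polynomial.deriv] at this
      obtain ⟨q, hq⟩ := (dvd_iff_isRoot.mpr hroot)
      have hqroot : q.eval z.re = 0 := by
        have h4 := congrArg (Polynomial.eval z.re) (congrArg Polynomial.derivative hq)
        simpa [derivative_mul, hderiv] using h4.symm
      obtain ⟨q₂, hq₂⟩ := (dvd_iff_isRoot.mpr hqroot)
      have hfac : p = (X - C z.re) ^ 2 * q₂ := by rw [hq, hq₂]; ring
      have hq₂ne : q₂ ≠ 0 := by rintro rfl; simp at hfac; exact hp0 hfac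
      have hq₂nonneg : ∀ x : ℝ, 0 ≤ q₂.eval x := by
        apply nonneg_of_nonneg_off_roots q₂ (X - C z.re) (X_sub_C_ne_zero z.re)
        intro x hx
        simp only [eval_sub, eval_X, eval_C] at hx
        have h1 : 0 < (x - z.re) ^ 2 := by positivity
        have h2 : 0 ≤ (x - z.re) ^ 2 * q₂.eval x := by
          have := hp x
          rw [hfac] at this
          simpa using this
        rw [mul_comm] at h2
        exact nonneg_of_mul_nonneg_left h2 h1
      have hdeg2 : q₂.natDegree < n := by
        have : p.natDegree = 2 + q₂.natDegree := by
          rw [hfac, natDegree_mul (pow_ne_zero 2 (X_sub_C_ne_zero z.re)) hq₂ne]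
          simp [natDegree_pow]
        omega
      obtain ⟨a, b, hab⟩ := ih q₂.natDegree hdeg2 q₂ le_rfl hq₂nonneg
      exact ⟨(X - C z.re) * a, (X - C z.re) * b, by rw [hfac, hab]; ring⟩
    · -- nonreal root
      set q : Polynomial ℝ := X ^ 2 + (C (-(2 * z.re)) * X + C (z.re ^ 2 + z.im ^ 2)) with hqdef
      have hlin : (C (-(2 * z.re)) * X + C (z.re ^ 2 + z.im ^ 2)).degree < ((2:ℕ) : WithBot ℕ) :=
        lt_of_le_of_lt degree_linear_le (by norm_num)
      have hqmonic : q.Monic := monic_X_pow_add hlin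
      have hqdeg : q.degree = 2 := by
        rw [hqdef, degree_add_eq_left_of_degree_lt (by simpa using hlin), degree_X_pow]
        norm_cast
      have hqnat : q.natDegree = 2 := natDegree_eq_of_degree_eq_some hqdeg
      -- q has z as a complex root
      have hQz : (q.map (algebraMap ℝ ℂ)).eval z = 0 := by
        have : (q.map (algebraMap ℝ ℂ)).eval z
            = z ^ 2 + ((-(2 * z.re) : ℝ) * z + ((z.re ^ 2 + z.im ^ 2 : ℝ) : ℂ)) := by
          simp [hqdef]
        rw [this]
        apply Complex.ext <;>
          simp [pow_two, Complex.mul_re, Complex.mul_im, Complex.add_re, Complex.add_im] <;>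
          ring
      -- remainder of p mod q vanishes
      set d : Polynomial ℝ := p /ₘ q with hddef
      set rem : Polynomial ℝ := p %ₘ q with hremdef
      have hsplit : rem + q * d = p := modByMonic_add_div p q
      have hremlt : rem.degree < q.degree := degree_modByMonic_lt p hqmonic
      have hremle : rem.degree ≤ 1 := by
        rw [hqdeg] at hremlt
        by_cases h : rem = 0
        · simp [h]
        · rw [degree_eq_natDegree h] at hremlt ⊢
          exact_mod_cast Nat.lt_succ_iff.mp (by exact_mod_cast hremlt)
      have hremeq : rem = C (rem.coeff 1) * X + C (rem.coeff 0) :=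
        eq_X_add_C_of_degree_le_one hremle
      have hevalz : ((rem.coeff 1 : ℝ) : ℂ) * z + ((rem.coeff 0 : ℝ) : ℂ) = 0 := by
        have h8 := congrArg (fun r => (Polynomial.map (algebraMap ℝ ℂ) r).eval z) hsplit
        simp only [Polynomial.map_add, Polynomial.map_mul, eval_add, eval_mul, hQz,
          zero_mul, add_zero] at h8
        rw [← hP] at h8
        rw [hz] at h8
        rw [hremeq] at h8
        simpa using h8
      have hc1 : rem.coeff 1 = 0 := by
        have := congrArg Complex.im hevalz
        simp at this
        rcases this with h | h
        · exact h
        · exact absurd h him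
      have hc0 : rem.coeff 0 = 0 := by
        have := congrArg Complex.re hevalz
        simp [hc1] at this
        exact this
      have hrem0 : rem = 0 := by rw [hremeq, hc1, hc0]; simp
      have hfac : p = q * d := by rw [← hsplit, hrem0, zero_add]
      -- q is positive everywhere
      have hqpos : ∀ x : ℝ, 0 < q.eval x := by
        intro x
        have h9 : q.eval x = (x - z.re) ^ 2 + z.im ^ 2 := by
          simp [hqdef]; ring
        rw [h9]
        have := sq_pos_of_ne_zero him
        positivity
      have hdne : d ≠ 0 := by intro h; rw [h, mul_zero] at hfac; exact hp0 hfac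
      have hdnonneg : ∀ x : ℝ, 0 ≤ d.eval x := by
        intro x
        have h2 : 0 ≤ q.eval x * d.eval x := by rw [← eval_mul, ← hfac]; exact hp x
        rw [mul_comm] at h2
        exact nonneg_of_mul_nonneg_left h2 (hqpos x)
      have hdeg2 : d.natDegree < n := by
        have : p.natDegree = 2 + d.natDegree := by
          rw [hfac, natDegree_mul hqmonic.ne_zero hdne, hqnat]
        omega
      obtain ⟨a, b, hab⟩ := ih d.natDegree hdeg2 d le_rfl hdnonneg
      have hqeq : q = (X - C z.re) ^ 2 + C z.im ^ 2 := by
        rw [hqdef]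
        simp only [C_neg, C_mul, C_add, C_pow, map_ofNat]
        ring
      refine ⟨(X - C z.re) * a - C z.im * b, (X - C z.re) * b + C z.im * a, ?_⟩
      rw [hfac, hab, hqeq]
      ring

lemma sum_two_sq (p : Polynomial ℝ) (hp : ∀ x : ℝ, 0 ≤ p.eval x) :
    ∃ a b : Polynomial ℝ, p = a ^ 2 + b ^ 2 :=
  sum_two_sq_aux p.natDegree p le_rfl hp

lemma ratfunc_eval_eq (h : RatFunc ℝ) (x : ℝ) :
    RatFunc.eval (RingHom.id ℝ) x h = h.num.eval x / h.denom.eval x := rfl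

lemma ratfunc_nonneg_iff (h : RatFunc ℝ) :
    (∀ x : ℝ, h.denom.eval x ≠ 0 → 0 ≤ RatFunc.eval (RingHom.id ℝ) x h) ↔
    ∃ a b : RatFunc ℝ, h = a ^ 2 + b ^ 2 := by
  have hdne : h.denom ≠ 0 := h.denom_ne_zero
  have hdM : (algebraMap (Polynomial ℝ) (RatFunc ℝ)) h.denom ≠ 0 :=
    RatFunc.algebraMap_ne_zero hdne
  constructor
  · intro hpos
    set N := h.num * h.denom with hN
    have hNnonneg : ∀ x : ℝ, 0 ≤ N.eval x := by
      apply nonneg_of_nonneg_off_roots N h.denom hdne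
      intro x hx
      have h1 : 0 ≤ h.num.eval x / h.denom.eval x := by
        rw [← ratfunc_eval_eq]; exact hpos x hx
      have h2 : N.eval x = (h.num.eval x / h.denom.eval x) * (h.denom.eval x) ^ 2 := by
        rw [hN, eval_mul]; field_simp
      rw [h2]; positivity
    obtain ⟨a, b, hab⟩ := sum_two_sq N hNnonneg
    refine ⟨algebraMap _ _ a / algebraMap _ _ h.denom,
            algebraMap _ _ b / algebraMap _ _ h.denom, ?_⟩
    have hmul : h * algebraMap (Polynomial ℝ) (RatFunc ℝ) h.denom
        = algebraMap (Polynomial ℝ) (RatFunc ℝ) h.num :=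
      (eq_div_iff hdM).mp (RatFunc.num_div_denom h).symm
    have hNh : (algebraMap (Polynomial ℝ) (RatFunc ℝ)) N
        = h * (algebraMap (Polynomial ℝ) (RatFunc ℝ) h.denom) ^ 2 := by
      rw [hN, map_mul, ← hmul]; ring
    rw [div_pow, div_pow, ← add_div, ← map_pow, ← map_pow, ← map_add, ← hab, hNh]
    rw [mul_div_assoc, div_self (pow_ne_zero 2 hdM), mul_one]
  · rintro ⟨A, B, hab⟩ x hx
    have hmul2 : h * algebraMap (Polynomial ℝ) (RatFunc ℝ) h.denom
        = algebraMap (Polynomial ℝ) (RatFunc ℝ) h.num :=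
      (eq_div_iff hdM).mp (RatFunc.num_div_denom h).symm
    set q := A.denom * B.denom with hq
    set p₁ := A.num * B.denom with hp₁
    set p₂ := B.num * A.denom with hp₂
    have hqne : q ≠ 0 := mul_ne_zero A.denom_ne_zero B.denom_ne_zero
    have hAd : (algebraMap (Polynomial ℝ) (RatFunc ℝ)) A.denom ≠ 0 :=
      RatFunc.algebraMap_ne_zero A.denom_ne_zero
    have hBd : (algebraMap (Polynomial ℝ) (RatFunc ℝ)) B.denom ≠ 0 :=
      RatFunc.algebraMap_ne_zero B.denom_ne_zero
    have hAmul : A * algebraMap (Polynomial ℝ) (RatFunc ℝ) A.denom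
        = algebraMap (Polynomial ℝ) (RatFunc ℝ) A.num :=
      (eq_div_iff hAd).mp (RatFunc.num_div_denom A).symm
    have hBmul : B * algebraMap (Polynomial ℝ) (RatFunc ℝ) B.denom
        = algebraMap (Polynomial ℝ) (RatFunc ℝ) B.num :=
      (eq_div_iff hBd).mp (RatFunc.num_div_denom B).symm
    have hAq : A * algebraMap _ _ q = algebraMap _ _ p₁ := by
      rw [hq, hp₁, map_mul, map_mul, ← hAmul]; ring
    have hBq : B * algebraMap _ _ q = algebraMap _ _ p₂ := by
      rw [hq, hp₂, map_mul, map_mul, ← hBmul]; ring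
    have e1 : h * (algebraMap (Polynomial ℝ) (RatFunc ℝ) q) ^ 2
        = algebraMap _ _ (p₁ ^ 2 + p₂ ^ 2) := by
      rw [map_add, map_pow, map_pow, ← hAq, ← hBq, hab]; ring
    have e2 : algebraMap (Polynomial ℝ) (RatFunc ℝ) (h.num * q ^ 2)
        = algebraMap _ _ (h.denom * (p₁ ^ 2 + p₂ ^ 2)) := by
      rw [map_mul, map_mul, ← e1, map_pow, ← hmul2]
      ring
    have hpoly : h.num * q ^ 2 = h.denom * (p₁ ^ 2 + p₂ ^ 2) :=
      IsFractionRing.injective (Polynomial ℝ) (RatFunc ℝ) e2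
    set N := h.num * h.denom with hN
    have hNnonneg : ∀ y : ℝ, 0 ≤ N.eval y := by
      apply nonneg_of_nonneg_off_roots N q hqne
      intro y hy
      have key : N.eval y * (q.eval y) ^ 2
          = (h.denom.eval y) ^ 2 * ((p₁.eval y) ^ 2 + (p₂.eval y) ^ 2) := by
        have := congrArg (fun r => h.denom.eval y * Polynomial.eval y r) hpoly
        simp only [eval_mul, eval_add, eval_pow] at this
        rw [hN, eval_mul]
        nlinarith [this]
      have h3 : 0 ≤ N.eval y * (q.eval y) ^ 2 := by rw [key]; positivity
      exact nonneg_of_mul_nonneg_left h3 (sq_pos_of_ne_zero hy)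
    rw [ratfunc_eval_eq]
    have h4 : h.num.eval x / h.denom.eval x = N.eval x / (h.denom.eval x) ^ 2 := by
      rw [hN, eval_mul]; field_simp
    rw [h4]
    exact div_nonneg (hNnonneg x) (sq_nonneg _)

theorem L1_diophantine (g : RatFunc ℝ) :
    IsDiophantine {f : RatFunc ℝ |
      ∀ x : ℝ, (g - f).denom.eval x ≠ 0 → 0 ≤ RatFunc.eval (RingHom.id ℝ) x (g - f)} := by
  refine ⟨1, 2, fun _ => MvPolynomial.X 0 + (MvPolynomial.X 1) ^ 2 + (MvPolynomial.X 2) ^ 2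
    - MvPolynomial.C g, ?_⟩
  intro r
  simp only [Set.mem_setOf_eq]
  rw [ratfunc_nonneg_iff (g - r)]
  have hc1 : ∀ (y : Fin 2 → RatFunc ℝ), (Fin.cons r y : Fin 3 → RatFunc ℝ) 1 = y 0 :=
    fun y => rfl
  have hc2 : ∀ (y : Fin 2 → RatFunc ℝ), (Fin.cons r y : Fin 3 → RatFunc ℝ) 2 = y 1 :=
    fun y => rfl
  constructor
  · rintro ⟨a, b, hab⟩
    refine ⟨![a, b], fun i => ?_⟩
    simp only [MvPolynomial.eval_add, MvPolynomial.eval_sub, MvPolynomial.eval_pow,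
      MvPolynomial.eval_X, MvPolynomial.eval_C, Fin.cons_zero, hc1, hc2]
    simp only [Matrix.cons_val_zero, Matrix.cons_val_one, Matrix.head_cons]
    linear_combination -hab
  · rintro ⟨y, hy⟩
    have h1 := hy 0
    simp only [MvPolynomial.eval_add, MvPolynomial.eval_sub, MvPolynomial.eval_pow,
      MvPolynomial.eval_X, MvPolynomial.eval_C, Fin.cons_zero, hc1, hc2] at h1
    exact ⟨y 0, y 1, by linear_combination -h1⟩
end
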